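/- Uniqueness of the generic structure: if M and M' are two countably infinite graphs, each of which (i) is the union of an increasing chain of finite self-sufficient subsets, (ii) has the property that every isomorphism between finite self-sufficient induced subgraphs extends to an automorphism, and (iii) realizes every graph in K₀ as the induced subgraph on some finite self-sufficient subset, then M and M' are isomorphic. -/

import Mathlib

open scoped Cardinal

/-- Number of edges of the graph `G` with both endpoints in `A`
(ordered pairs counted and divided by two). -/
noncomputable def edgeCount {V : Type*} (G : SimpleGraph V) (A : Set V) : ℕ :=
  {p : V × V | p.1 ∈ A ∧ p.2 ∈ A ∧ G.Adj p.1 p.2}.ncard / 2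

/-- The pre-dimension `δ(A) = m·|A| − e(A)`. -/
noncomputable def delta {V : Type*} (m : ℕ) (G : SimpleGraph V) (A : Set V) : ℤ :=
  (m : ℤ) * A.ncard - edgeCount G A

/-- `A` is self-sufficient (`≤`-closed) in `B`:  `A ⊆ B` and `δ(A') ≥ δ(A)` for
every finite `A'` with `A ⊆ A' ⊆ B`. -/
def SelfSuff {V : Type*} (m : ℕ) (G : SimpleGraph V) (A B : Set V) : Prop :=
  A ⊆ B ∧ ∀ A' : Set V, A'.Finite → A ⊆ A' → A' ⊆ B → delta m G A ≤ delta m G A'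

/-- A graph belongs to the class `K₀` if `δ(A') ≥ 0` for every set `A'` of its
vertices (used for finite graphs). -/
def InK0 {V : Type*} (m : ℕ) (G : SimpleGraph V) : Prop :=
  ∀ A : Set V, 0 ≤ delta m G A

/-- `G` is a `(K₀,≤)`-generic graph: (i) it is the union of an increasing chain of
finite self-sufficient subsets; (ii) every isomorphism between finite self-sufficient
induced subgraphs extends to an automorphism; (iii) every finite graph in `K₀` is
isomorphic to the induced subgraph on some finite self-sufficient subset. -/
def IsGeneric (m : ℕ) {V : Type} (G : SimpleGraph V) : Prop :=
  (∃ F : ℕ → Set V, (∀ n, (F n).Finite) ∧ (∀ n, F n ⊆ F (n + 1)) ∧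
      (∀ n, SelfSuff m G (F n) Set.univ) ∧ (⋃ n, F n) = Set.univ) ∧
  (∀ A B : Set V, A.Finite → B.Finite → SelfSuff m G A Set.univ → SelfSuff m G B Set.univ →
      ∀ e : G.induce A ≃g G.induce B, ∃ g : G ≃g G, ∀ a : A, g a = (e a : V)) ∧
  (∀ (W : Type) (_ : Fintype W) (H : SimpleGraph W), InK0 m H →
      ∃ s : Set V, s.Finite ∧ SelfSuff m G s Set.univ ∧ Nonempty (H ≃g G.induce s))

/-- The self-sufficient closure `cl(A)`: the intersection of all finite
self-sufficient subsets of the ambient graph containing `A` (which is the smallest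
such set whenever a smallest one exists). -/
def scl {V : Type*} (m : ℕ) (G : SimpleGraph V) (A : Set V) : Set V :=
  ⋂₀ {B : Set V | A ⊆ B ∧ B.Finite ∧ SelfSuff m G B Set.univ}

/-- The dimension `d(A) = δ(cl(A))`. -/
noncomputable def gdim {V : Type*} (m : ℕ) (G : SimpleGraph V) (A : Set V) : ℤ :=
  delta m G (scl m G A)

/-- The geometric closure
`gcl(X) = { v : d(A ∪ {v}) = d(A) for some finite A ⊆ X }`. -/
def gcl {V : Type*} (m : ℕ) (G : SimpleGraph V) (X : Set V) : Set V :=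
  {v | ∃ A : Set V, A ⊆ X ∧ A.Finite ∧ gdim m G (A ∪ {v}) = gdim m G A}

/-- The pointwise stabilizer `Aut_A(M)` of a set `A` of vertices, as a subgroup of
the automorphism group. -/
def pointStab {V : Type*} (G : SimpleGraph V) (A : Set V) : Subgroup (G ≃g G) where
  carrier := {g | ∀ a ∈ A, g a = a}
  one_mem' := fun a _ => rfl
  mul_mem' := by
    intro g h hg hh a ha
    show g (h a) = a
    rw [hh a ha, hg a ha]
  inv_mem' := by
    intro g hg a ha
    show g⁻¹ a = a
    conv_lhs => rw [← hg a ha]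
    simp

/-- The setwise stabilizer `Aut_{{X}}(M) = { g : g[X] = X }` of a set `X` of
vertices, as a subgroup of the automorphism group. -/
def setStab {V : Type*} (G : SimpleGraph V) (X : Set V) : Subgroup (G ≃g G) where
  carrier := {g | (fun v => g v) '' X = X}
  one_mem' := by simp
  mul_mem' := by
    intro g h hg hh
    show (fun v => g (h v)) '' X = X
    rw [show (fun v => g (h v)) = (fun v => g v) ∘ (fun v => h v) from rfl,
      Set.image_comp, hh, hg]
  inv_mem' := by
    intro g hg
    show (fun v => g⁻¹ v) '' X = X
    conv_lhs => rw [← hg]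
    rw [← Set.image_comp]
    have : (fun v => g⁻¹ v) ∘ (fun v => g v) = id := by
      funext v
      show g⁻¹ (g v) = v
      simp
    rw [this, Set.image_id]

/-- The topology of pointwise convergence on the automorphism group of a graph
(the vertex set being discrete). -/
def autTop (V : Type*) (G : SimpleGraph V) : TopologicalSpace (G ≃g G) :=
  TopologicalSpace.induced (fun g => (g : V → V))
    (@Pi.topologicalSpace V (fun _ => V) (fun _ => ⊥))




/-! ### Auxiliary material for the proof -/

/-- auxiliary: pair set -/
def pairSet {V : Type*} (G : SimpleGraph V) (A : Set V) : Set (V × V) :=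
  {p : V × V | p.1 ∈ A ∧ p.2 ∈ A ∧ G.Adj p.1 p.2}

lemma pairSet_subset {V : Type*} (G : SimpleGraph V) (A : Set V) :
    pairSet G A ⊆ A ×ˢ A := fun p hp => ⟨hp.1, hp.2.1⟩

lemma pairSet_finite {V : Type*} {G : SimpleGraph V} {A : Set V} (hA : A.Finite) :
    (pairSet G A).Finite := (hA.prod hA).subset (pairSet_subset G A)

lemma even_card_invol {α : Type*} [DecidableEq α] :
    ∀ (n : ℕ) (s : Finset α), s.card ≤ n → ∀ f : α → α, (∀ x ∈ s, f x ∈ s) →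
      (∀ x ∈ s, f (f x) = x) → (∀ x ∈ s, f x ≠ x) → Even s.card := by
  intro n
  induction n with
  | zero => intro s hs f _ _ _; simp [Nat.le_zero.mp hs]
  | succ n ih =>
    intro s hs f h1 h2 h3
    rcases s.eq_empty_or_nonempty with rfl | ⟨a, ha⟩
    · simp
    · have hfa : f a ∈ s := h1 a ha
      have hne : f a ≠ a := h3 a ha
      set s' := (s.erase a).erase (f a) with hs'
      have hmem : ∀ x, x ∈ s' ↔ x ∈ s ∧ x ≠ a ∧ x ≠ f a := by
        intro x
        simp only [hs', Finset.mem_erase]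
        tauto
      have hcard : s.card = s'.card + 2 := by
        have h1' : (s.erase a).card = s.card - 1 := Finset.card_erase_of_mem ha
        have hfa' : f a ∈ s.erase a := Finset.mem_erase.2 ⟨hne, hfa⟩
        have h2' : s'.card = (s.erase a).card - 1 := Finset.card_erase_of_mem hfa'
        have hpos : 1 ≤ s.card := Finset.card_pos.2 ⟨a, ha⟩
        have hpos2 : 1 ≤ (s.erase a).card := Finset.card_pos.2 ⟨f a, hfa'⟩
        omega
      have hev : Even s'.card := by
        apply ih s' (by omega) f
        · intro x hx
          rw [hmem] at hx ⊢
          refine ⟨h1 x hx.1, ?_, ?_⟩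
          · intro h; apply hx.2.2
            have hxx := h2 x hx.1; rw [h] at hxx; exact hxx.symm
          · intro h; apply hx.2.1
            have hxx := h2 x hx.1; rw [h, h2 a ha] at hxx; exact hxx.symm
        · intro x hx; exact h2 x ((hmem x).1 hx).1
        · intro x hx; exact h3 x ((hmem x).1 hx).1
      rw [hcard]
      rcases hev with ⟨k, hk⟩
      exact ⟨k + 1, by omega⟩

lemma edgeCount_eq {V : Type*} (G : SimpleGraph V) (A : Set V) :
    edgeCount G A = (pairSet G A).ncard / 2 := rfl

lemma even_ncard_pairSet (G : SimpleGraph V) (A : Set V) :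
    Even (pairSet G A).ncard := by
  classical
  rcases (pairSet G A).finite_or_infinite with hf | hi
  · have := even_card_invol hf.toFinset.card hf.toFinset le_rfl Prod.swap
      (fun x hx => by
        simp only [Set.Finite.mem_toFinset] at hx ⊢
        exact ⟨hx.2.1, hx.1, hx.2.2.symm⟩)
      (fun x _ => Prod.swap_swap x)
      (fun x hx => by
        simp only [Set.Finite.mem_toFinset] at hx
        intro h
        have : x.2 = x.1 := congrArg Prod.fst h
        exact G.loopless.irrefl _ (this ▸ hx.2.2))
    rwa [Set.ncard_eq_toFinset_card _ hf]
  · simp [hi.ncard]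

lemma two_mul_edgeCount (G : SimpleGraph V) (A : Set V) :
    2 * edgeCount G A = (pairSet G A).ncard := by
  rcases even_ncard_pairSet G A with ⟨k, hk⟩
  rw [edgeCount_eq]
  simp [hk, two_mul, Nat.add_mul_div_left]
  omega

section
variable {V : Type*} {G : SimpleGraph V} {m : ℕ}

lemma delta_empty (m : ℕ) (G : SimpleGraph V) : delta m G (∅ : Set V) = 0 := by
  have h : pairSet G (∅ : Set V) = ∅ := by
    ext p; simp [pairSet]
  simp [delta, edgeCount_eq, h]

lemma two_mul_delta (m : ℕ) (G : SimpleGraph V) (A : Set V) :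
    2 * delta m G A = 2 * (m : ℤ) * A.ncard - (pairSet G A).ncard := by
  have h := two_mul_edgeCount G A
  have h' : (2 : ℤ) * (edgeCount G A : ℤ) = ((pairSet G A).ncard : ℤ) := by
    exact_mod_cast congrArg (Nat.cast : ℕ → ℤ) h
  simp only [delta]
  ring_nf
  ring_nf at h'
  omega

lemma delta_submod (m : ℕ) (G : SimpleGraph V) {X Y : Set V}
    (hX : X.Finite) (hY : Y.Finite) :
    delta m G (X ∪ Y) + delta m G (X ∩ Y) ≤ delta m G X + delta m G Y := by
  have hpU : pairSet G X ∪ pairSet G Y ⊆ pairSet G (X ∪ Y) := by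
    rintro p (hp | hp)
    · exact ⟨Or.inl hp.1, Or.inl hp.2.1, hp.2.2⟩
    · exact ⟨Or.inr hp.1, Or.inr hp.2.1, hp.2.2⟩
  have hpI : pairSet G X ∩ pairSet G Y = pairSet G (X ∩ Y) := by
    ext p
    simp only [pairSet, Set.mem_inter_iff, Set.mem_setOf_eq]
    tauto
  have h1 : (pairSet G X).ncard + (pairSet G Y).ncard
      ≤ (pairSet G (X ∪ Y)).ncard + (pairSet G (X ∩ Y)).ncard := by
    have := Set.ncard_union_add_ncard_inter (pairSet G X) (pairSet G Y)
      (pairSet_finite hX) (pairSet_finite hY)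
    have hle : (pairSet G X ∪ pairSet G Y).ncard ≤ (pairSet G (X ∪ Y)).ncard :=
      Set.ncard_le_ncard hpU (pairSet_finite (hX.union hY))
    rw [hpI] at this
    omega
  have hcard : (X ∪ Y).ncard + (X ∩ Y).ncard = X.ncard + Y.ncard :=
    Set.ncard_union_add_ncard_inter X Y hX hY
  have e1 := two_mul_delta m G (X ∪ Y)
  have e2 := two_mul_delta m G (X ∩ Y)
  have e3 := two_mul_delta m G X
  have e4 := two_mul_delta m G Y
  have hc : ((X ∪ Y).ncard : ℤ) + ((X ∩ Y).ncard : ℤ) = (X.ncard : ℤ) + (Y.ncard : ℤ) := by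
    exact_mod_cast hcard
  have h1' : ((pairSet G X).ncard : ℤ) + ((pairSet G Y).ncard : ℤ)
      ≤ ((pairSet G (X ∪ Y)).ncard : ℤ) + ((pairSet G (X ∩ Y)).ncard : ℤ) := by
    exact_mod_cast h1
  nlinarith [e1, e2, e3, e4]

end

lemma pairSet_image_key {α : Type*} {W : Type*} (H : SimpleGraph W) (χ : α → W)
    (S : Set α) :
    pairSet H (χ '' S) = Prod.map χ χ '' {p : α × α | p.1 ∈ S ∧ p.2 ∈ S ∧ H.Adj (χ p.1) (χ p.2)} := by
  ext ⟨x, y⟩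
  constructor
  · rintro ⟨⟨a, ha, ha'⟩, ⟨b, hb, hb'⟩, hab⟩
    subst ha'; subst hb'
    exact ⟨(a, b), ⟨ha, hb, hab⟩, rfl⟩
  · rintro ⟨⟨a, b⟩, ⟨ha, hb, hab⟩, hp⟩
    obtain ⟨h1, h2⟩ := Prod.mk.injEq .. ▸ hp
    subst h1; subst h2
    exact ⟨⟨a, ha, rfl⟩, ⟨b, hb, rfl⟩, hab⟩

lemma ncard_prodMap_image {α β : Type*} (χ : α → β) {S : Set α} (hχ : Set.InjOn χ S)
    (Q : Set (α × α)) (hQ : Q ⊆ S ×ˢ S) : ((Prod.map χ χ) '' Q).ncard = Q.ncard := by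
  apply Set.ncard_image_of_injOn
  rintro ⟨a, b⟩ hab ⟨c, d⟩ hcd h
  obtain ⟨ha, hb⟩ := hQ hab
  obtain ⟨hc, hd⟩ := hQ hcd
  have h1 : χ a = χ c := congrArg Prod.fst h
  have h2 : χ b = χ d := congrArg Prod.snd h
  exact Prod.ext (hχ ha hc h1) (hχ hb hd h2)

lemma delta_congr {α : Type*} {V : Type*} {V' : Type*} (m : ℕ) (G : SimpleGraph V) (G' : SimpleGraph V')
    (φ : α → V) (ψ : α → V') (S : Set α) (hφ : Set.InjOn φ S) (hψ : Set.InjOn ψ S)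
    (hadj : ∀ a ∈ S, ∀ b ∈ S, (G.Adj (φ a) (φ b) ↔ G'.Adj (ψ a) (ψ b))) :
    delta m G (φ '' S) = delta m G' (ψ '' S) := by
  have hQ : {p : α × α | p.1 ∈ S ∧ p.2 ∈ S ∧ G.Adj (φ p.1) (φ p.2)}
      = {p : α × α | p.1 ∈ S ∧ p.2 ∈ S ∧ G'.Adj (ψ p.1) (ψ p.2)} := by
    ext p
    simp only [Set.mem_setOf_eq]
    constructor
    · rintro ⟨h1, h2, h3⟩; exact ⟨h1, h2, (hadj _ h1 _ h2).1 h3⟩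
    · rintro ⟨h1, h2, h3⟩; exact ⟨h1, h2, (hadj _ h1 _ h2).2 h3⟩
  have hsub1 : {p : α × α | p.1 ∈ S ∧ p.2 ∈ S ∧ G.Adj (φ p.1) (φ p.2)} ⊆ S ×ˢ S :=
    fun p hp => ⟨hp.1, hp.2.1⟩
  have hsub2 : {p : α × α | p.1 ∈ S ∧ p.2 ∈ S ∧ G'.Adj (ψ p.1) (ψ p.2)} ⊆ S ×ˢ S :=
    fun p hp => ⟨hp.1, hp.2.1⟩
  have hpc : (pairSet G (φ '' S)).ncard = (pairSet G' (ψ '' S)).ncard := by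
    rw [pairSet_image_key G φ S, pairSet_image_key G' ψ S,
      ncard_prodMap_image φ hφ _ hsub1, ncard_prodMap_image ψ hψ _ hsub2, hQ]
  have hnc : (φ '' S).ncard = (ψ '' S).ncard := by
    rw [Set.ncard_image_of_injOn hφ, Set.ncard_image_of_injOn hψ]
  simp only [delta, edgeCount_eq, hpc, hnc]

section
variable {V : Type} {V' : Type} {m : ℕ} {G : SimpleGraph V} {G' : SimpleGraph V'}

/-- restriction of self-sufficiency in `univ` to a smaller ambient set -/
lemma SelfSuff.mono {A B : Set V} (h : SelfSuff m G A Set.univ) (hAB : A ⊆ B) :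
    SelfSuff m G A B :=
  ⟨hAB, fun A' hf h1 _ => h.2 A' hf h1 (Set.subset_univ _)⟩

/-- δ(A ∩ C) ≤ δ(C) whenever A ≤ M -/
lemma delta_inter_le {A C : Set V} (hA : SelfSuff m G A Set.univ) (hAf : A.Finite)
    (hC : C.Finite) : delta m G (A ∩ C) ≤ delta m G C := by
  have h1 := delta_submod m G hAf hC
  have h2 : delta m G A ≤ delta m G (A ∪ C) :=
    hA.2 (A ∪ C) (hAf.union hC) Set.subset_union_left (Set.subset_univ _)
  linarith

/-- transitivity: A ≤ t ≤ M implies A ≤ M -/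
lemma selfSuff_trans {A t : Set V} (hAt : SelfSuff m G A t) (ht : SelfSuff m G t Set.univ)
    (htf : t.Finite) : SelfSuff m G A Set.univ := by
  refine ⟨Set.subset_univ _, fun X hXf hAX _ => ?_⟩
  have h1 : delta m G A ≤ delta m G (X ∩ t) :=
    hAt.2 (X ∩ t) (hXf.inter_of_left t) (Set.subset_inter hAX hAt.1) Set.inter_subset_right
  have h2 : delta m G (t ∩ X) ≤ delta m G X := delta_inter_le ht htf hXf
  rw [Set.inter_comm X t] at h1
  exact h1.trans h2

/-- the empty set is self-sufficient in a generic graph -/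
lemma empty_selfSuff (hG : IsGeneric m G) : SelfSuff m G (∅ : Set V) Set.univ := by
  obtain ⟨s, hsf, hss, ⟨iso⟩⟩ := hG.2.2 Empty inferInstance ⊥ (by
    intro A
    have : A = (∅ : Set Empty) := Set.eq_empty_of_isEmpty A
    rw [this, delta_empty])
  have hs : s = ∅ := by
    by_contra h
    obtain ⟨v, hv⟩ := Set.nonempty_iff_ne_empty.2 h
    exact (iso.symm ⟨v, hv⟩).elim
  rwa [hs] at hss

/-- every finite subset of a generic graph has nonnegative δ -/
lemma delta_nonneg (hG : IsGeneric m G) {C : Set V} (hC : C.Finite) :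
    0 ≤ delta m G C := by
  have := (empty_selfSuff hG).2 C hC (Set.empty_subset C) (Set.subset_univ C)
  rwa [delta_empty] at this

/-- transporting a relative self-sufficiency statement along compatible injections -/
lemma selfSuff_transport {α : Type} (φ : α → V) (ψ : α → V')
    (hφ : Function.Injective φ) (hψ : Function.Injective ψ)
    (hadj : ∀ a b, G.Adj (φ a) (φ b) ↔ G'.Adj (ψ a) (ψ b))
    {S T : Set α} (hST : S ⊆ T)
    (h : SelfSuff m G (φ '' S) (φ '' T)) : SelfSuff m G' (ψ '' S) (ψ '' T) := by
  refine ⟨Set.image_mono (f := ψ) hST, fun X hXf h1 h2 => ?_⟩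
  set S' : Set α := ψ ⁻¹' X ∩ T with hS'
  have hXim : ψ '' S' = X := by
    apply Set.Subset.antisymm
    · rintro x ⟨a, ⟨ha1, _⟩, rfl⟩; exact ha1
    · intro x hx
      obtain ⟨a, ha, rfl⟩ := h2 hx
      exact ⟨a, ⟨hx, ha⟩, rfl⟩
  have hS'f : S'.Finite := by
    have : S' ⊆ ψ ⁻¹' X := Set.inter_subset_left
    exact (hXf.preimage hψ.injOn).subset this
  have hSS' : S ⊆ S' := by
    intro a ha
    exact ⟨h1 ⟨a, ha, rfl⟩, hST ha⟩
  have d1 : delta m G (φ '' S) = delta m G' (ψ '' S) :=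
    delta_congr m G G' φ ψ S hφ.injOn hψ.injOn (fun a _ b _ => hadj a b)
  have d2 : delta m G (φ '' S') = delta m G' (ψ '' S') :=
    delta_congr m G G' φ ψ S' hφ.injOn hψ.injOn (fun a _ b _ => hadj a b)
  have := h.2 (φ '' S') (hS'f.image φ) (Set.image_mono (f := φ) hSS')
    (Set.image_mono (f := φ) Set.inter_subset_right)
  rw [d1, d2] at this
  rwa [hXim] at this

end

/-- congruence iso for induced subgraphs -/
def induceCongr {V : Type*} (G : SimpleGraph V) {s t : Set V} (h : s = t) :
    G.induce s ≃g G.induce t := by subst h; exact SimpleGraph.Iso.refl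

@[simp] lemma induceCongr_val {V : Type*} (G : SimpleGraph V) {s t : Set V} (h : s = t)
    (x : s) : (induceCongr G h x : V) = (x : V) := by subst h; rfl

/-- iso between induced subgraphs along compatible injections -/
noncomputable def isoOfMaps {α V V' : Type*} {G : SimpleGraph V} {G' : SimpleGraph V'}
    (φ : α → V) (ψ : α → V') (hφ : Function.Injective φ) (hψ : Function.Injective ψ)
    (hadj : ∀ a b, G.Adj (φ a) (φ b) ↔ G'.Adj (ψ a) (ψ b)) (S : Set α) :
    G.induce (φ '' S) ≃g G'.induce (ψ '' S) where
  toEquiv := (Equiv.Set.image φ S hφ).symm.trans (Equiv.Set.image ψ S hψ)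
  map_rel_iff' := by
    rintro ⟨_, s₁, hs₁, rfl⟩ ⟨_, s₂, hs₂, rfl⟩
    simp only [Equiv.trans_apply, Equiv.Set.image_symm_apply, Equiv.Set.image_apply,
      SimpleGraph.comap_adj, Function.Embedding.coe_subtype]
    have k : ∀ s (hs : φ s ∈ φ '' S), ((Equiv.Set.image φ S hφ).symm ⟨φ s, hs⟩ : α) = s :=
      fun s hs => by simp
    convert (hadj s₁ s₂).symm using 3 <;> exact k _ _

lemma isoOfMaps_val {α V V' : Type*} {G : SimpleGraph V} {G' : SimpleGraph V'}
    (φ : α → V) (ψ : α → V') (hφ : Function.Injective φ) (hψ : Function.Injective ψ)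
    (hadj : ∀ a b, G.Adj (φ a) (φ b) ↔ G'.Adj (ψ a) (ψ b)) (S : Set α)
    (s : α) (hs : s ∈ S) :
    (isoOfMaps φ ψ hφ hψ hadj S ⟨φ s, Set.mem_image_of_mem φ hs⟩ : V') = ψ s := by
  simp [isoOfMaps, Equiv.Set.image_symm_apply]

lemma forth {m : ℕ} {V V' : Type} {G : SimpleGraph V} {G' : SimpleGraph V'}
    (hG : IsGeneric m G) (hG' : IsGeneric m G')
    {A B : Set V} {A' : Set V'}
    (hAf : A.Finite) (hA'f : A'.Finite) (hBf : B.Finite)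
    (hA : SelfSuff m G A Set.univ) (hA' : SelfSuff m G' A' Set.univ)
    (hB : SelfSuff m G B Set.univ) (hAB : A ⊆ B)
    (e : G.induce A ≃g G'.induce A') :
    ∃ B' : Set V', B'.Finite ∧ SelfSuff m G' B' Set.univ ∧ A' ⊆ B' ∧
      ∃ e₂ : G.induce B ≃g G'.induce B',
        ∀ a : A, (e₂ (Set.inclusion hAB a) : V') = (e a : V') := by
  classical
  haveI : Fintype ↥B := hBf.fintype
  -- Step 1 : `G.induce B` belongs to `K₀`
  have hK0 : InK0 m (G.induce B) := by
    intro S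
    have h1 : delta m (G.induce B) (id '' S) = delta m G (Subtype.val '' S) := by
      apply delta_congr
      · exact Function.injective_id.injOn
      · exact Subtype.val_injective.injOn
      · intro a _ b _
        exact Iff.rfl
    rw [Set.image_id] at h1
    rw [h1]
    exact delta_nonneg hG (hBf.subset (by rintro x ⟨b, _, rfl⟩; exact b.2))
  -- Step 2 : realize `G.induce B` in `G'` over a self-sufficient set `t`
  obtain ⟨t, htf, hts, ⟨f⟩⟩ := hG'.2.2 ↥B inferInstance (G.induce B) hK0
  -- the two compatible injections
  set φ : ↥B → V := Subtype.val with hφdef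
  set ψ : ↥B → V' := fun b => (f b : V') with hψdef
  have hφ : Function.Injective φ := Subtype.val_injective
  have hψ : Function.Injective ψ := by
    intro a b hab
    exact f.injective (Subtype.val_injective hab)
  have hadj : ∀ a b, G.Adj (φ a) (φ b) ↔ G'.Adj (ψ a) (ψ b) := by
    intro a b
    have h1 : (G.induce B).Adj a b ↔ G.Adj (φ a) (φ b) := Iff.rfl
    have h2 : (G'.induce t).Adj (f a) (f b) ↔ G'.Adj (ψ a) (ψ b) := Iff.rfl
    rw [← h1, ← h2]
    exact f.map_adj_iff.symm
  set SA : Set ↥B := φ ⁻¹' A with hSAdef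
  have hA_eq : φ '' SA = A := by
    rw [hSAdef, hφdef, Subtype.image_preimage_coe]
    exact Set.inter_eq_self_of_subset_right hAB
  have huniv : φ '' (Set.univ : Set ↥B) = B := by
    rw [hφdef, Set.image_univ, Subtype.range_coe]
  set A₂ : Set V' := ψ '' SA with hA₂def
  have ht_eq : ψ '' (Set.univ : Set ↥B) = t := by
    rw [Set.image_univ]
    have : Set.range ψ = Subtype.val '' (Set.range f) := by
      rw [← Set.range_comp]; rfl
    have hrf : Set.range (⇑f) = Set.univ := Set.range_eq_univ.2 f.surjective
    rw [this, hrf, Set.image_univ, Subtype.range_coe]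
  have hA₂t : A₂ ⊆ t := by
    rintro x ⟨b, _, rfl⟩
    exact (f b).2
  have hA₂f : A₂.Finite := Set.Finite.image ψ (Set.toFinite SA)
  -- Step 3 : A₂ is self-sufficient in G'
  have hA₂s : SelfSuff m G' A₂ Set.univ := by
    have h0 : SelfSuff m G (φ '' SA) (φ '' Set.univ) := by
      rw [hA_eq, huniv]; exact hA.mono hAB
    have h1 := selfSuff_transport φ ψ hφ hψ hadj (Set.subset_univ SA) h0
    rw [ht_eq] at h1
    exact selfSuff_trans h1 hts htf
  -- Step 4 : the isomorphism ε between A₂ and A'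
  let ι : G.induce A ≃g G'.induce A₂ :=
    (induceCongr G hA_eq.symm).trans (isoOfMaps φ ψ hφ hψ hadj SA)
  have ι_val : ∀ (a : ↥A) (b : ↥B), (b : V) = (a : V) →
      (ι a : V') = ψ b := by
    intro a b hba
    have hbSA : b ∈ SA := by
      show φ b ∈ A
      rw [hφdef]; show (b : V) ∈ A; rw [hba]; exact a.2
    have h1 : induceCongr G hA_eq.symm a = ⟨φ b, Set.mem_image_of_mem φ hbSA⟩ := by
      apply Subtype.ext
      rw [induceCongr_val]
      exact hba.symm
    show ((isoOfMaps φ ψ hφ hψ hadj SA) (induceCongr G hA_eq.symm a) : V') = ψ b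
    rw [h1, isoOfMaps_val φ ψ hφ hψ hadj SA b hbSA]
  let ε : G'.induce A₂ ≃g G'.induce A' := ι.symm.trans e
  -- Step 5 : extend ε to an automorphism g of G'
  obtain ⟨g, hg⟩ := hG'.2.1 A₂ A' hA₂f hA'f hA₂s hA' ε
  -- Step 6 : define B'
  refine ⟨(fun v => g v) '' t, htf.image _, ?_, ?_, ?_⟩
  · -- self-sufficiency of B'
    have hadjg : ∀ a b, G'.Adj (id a) (id b) ↔ G'.Adj (g a) (g b) := by
      intro a b
      simp only [id]
      exact g.map_adj_iff.symm
    have h0 : SelfSuff m G' (id '' t) (id '' Set.univ) := by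
      rw [Set.image_id, Set.image_id]
      exact hts
    have h1 := selfSuff_transport id (fun v => g v) Function.injective_id
      (g.toEquiv.injective) hadjg (Set.subset_univ t) h0
    have hr : Set.range (fun v => g v) = Set.univ :=
      Set.range_eq_univ.2 (fun y => ⟨g.symm y, by simp⟩)
    rwa [Set.image_univ, hr] at h1
  · -- A' ⊆ B'
    intro x hx
    set y : ↥A₂ := ε.symm ⟨x, hx⟩ with hy
    have h1 : ε y = ⟨x, hx⟩ := by rw [hy]; exact ε.apply_symm_apply _
    have h2 : g (y : V') = (ε y : V') := hg y
    refine ⟨(y : V'), hA₂t y.2, ?_⟩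
    show g (y : V') = x
    rw [h2, h1]
  · -- the isomorphism e₂ and the extension property
    have hadjg : ∀ a b, G'.Adj (id a) (id b) ↔ G'.Adj (g a) (g b) := by
      intro a b
      simp only [id]
      exact g.map_adj_iff.symm
    let gRes : G'.induce t ≃g G'.induce ((fun v => g v) '' t) :=
      (induceCongr G' (Set.image_id t).symm).trans
        (isoOfMaps id (fun v => g v) Function.injective_id g.toEquiv.injective hadjg t)
    have gRes_val : ∀ x : ↥t, (gRes x : V') = g (x : V') := by
      intro x
      have h1 : induceCongr G' (Set.image_id t).symm x
          = ⟨id (x : V'), Set.mem_image_of_mem id x.2⟩ := by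
        apply Subtype.ext
        rw [induceCongr_val]
        rfl
      show ((isoOfMaps id (fun v => g v) Function.injective_id g.toEquiv.injective hadjg t)
        (induceCongr G' (Set.image_id t).symm x) : V') = g (x : V')
      rw [h1, isoOfMaps_val id (fun v => g v) Function.injective_id g.toEquiv.injective
        hadjg t (x : V') x.2]
    refine ⟨f.trans gRes, ?_⟩
    intro a
    set b : ↥B := Set.inclusion hAB a with hb
    have hba : (b : V) = (a : V) := rfl
    have hval : ((f.trans gRes) b : V') = g (ψ b) := by
      show (gRes (f b) : V') = g (ψ b)
      rw [gRes_val]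
    have hbSA : b ∈ SA := by
      show φ b ∈ A
      rw [hφdef]; show (b : V) ∈ A; rw [hba]; exact a.2
    have hmem : ψ b ∈ A₂ := Set.mem_image_of_mem ψ hbSA
    have h2 : g (ψ b) = (ε ⟨ψ b, hmem⟩ : V') := hg ⟨ψ b, hmem⟩
    have h3 : ι a = ⟨ψ b, hmem⟩ := by
      apply Subtype.ext
      exact ι_val a b hba
    have h4 : (ε ⟨ψ b, hmem⟩ : V') = (e a : V') := by
      show ((ι.symm.trans e) ⟨ψ b, hmem⟩ : V') = (e a : V')
      rw [← h3]
      show (e (ι.symm (ι a)) : V') = _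
      rw [ι.symm_apply_apply]
    rw [hval, h2, h4]

section MAIN
variable {m : ℕ} {V V' : Type} {G : SimpleGraph V} {G' : SimpleGraph V'}

/-- any finite set is contained in some finite self-sufficient set -/
lemma exists_selfSuff_superset (hG : IsGeneric m G) {C : Set V} (hC : C.Finite) :
    ∃ D : Set V, C ⊆ D ∧ D.Finite ∧ SelfSuff m G D Set.univ := by
  obtain ⟨F, hFf, hFmono, hFss, hFunion⟩ := hG.1
  have hmono : ∀ n k, n ≤ k → F n ⊆ F k := by
    intro n k hnk
    induction hnk with
    | refl => exact subset_rfl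
    | step h ih => exact ih.trans (hFmono _)
  suffices h : ∃ n, C ⊆ F n by
    obtain ⟨n, hn⟩ := h
    exact ⟨F n, hn, hFf n, hFss n⟩
  refine Set.Finite.induction_on (motive := fun s _ => ∃ n, s ⊆ F n) C hC ⟨0, Set.empty_subset _⟩ ?_
  intro a s _ _ ih
  obtain ⟨n, hn⟩ := ih
  have : a ∈ ⋃ k, F k := hFunion ▸ Set.mem_univ a
  obtain ⟨k, hk⟩ := Set.mem_iUnion.1 this
  exact ⟨max n k, Set.insert_subset (hmono k _ (le_max_right n k) hk)
    (hn.trans (hmono n _ (le_max_left n k)))⟩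

/-- the "back" direction -/
lemma back (hG : IsGeneric m G) (hG' : IsGeneric m G')
    {A : Set V} {A' B' : Set V'}
    (hAf : A.Finite) (hA'f : A'.Finite) (hB'f : B'.Finite)
    (hA : SelfSuff m G A Set.univ) (hA' : SelfSuff m G' A' Set.univ)
    (hB' : SelfSuff m G' B' Set.univ) (hA'B' : A' ⊆ B')
    (e : G.induce A ≃g G'.induce A') :
    ∃ B : Set V, B.Finite ∧ SelfSuff m G B Set.univ ∧ A ⊆ B ∧
      ∃ e₂ : G.induce B ≃g G'.induce B',
        ∀ a : A, ∀ (haB : (a : V) ∈ B), (e₂ ⟨a, haB⟩ : V') = (e a : V') := by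
  obtain ⟨B, hBf, hBs, hAB, e₂', he₂'⟩ :=
    forth hG' hG hA'f hAf hB'f hA' hA hB' hA'B' e.symm
  refine ⟨B, hBf, hBs, hAB, e₂'.symm, ?_⟩
  intro a haB
  have h1 : e₂' (Set.inclusion hA'B' (e a)) = ⟨(a : V), haB⟩ := by
    apply Subtype.ext
    rw [he₂' (e a)]
    have : e.symm (e a) = a := e.symm_apply_apply a
    rw [this]
  have h2 : e₂'.symm ⟨(a : V), haB⟩ = Set.inclusion hA'B' (e a) := by
    rw [← h1, RelIso.symm_apply_apply]
  rw [h2]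

/-- bundled finite partial isomorphisms -/
structure PIso (m : ℕ) {V V' : Type} (G : SimpleGraph V) (G' : SimpleGraph V') where
  A : Set V
  A' : Set V'
  hA : A.Finite
  hA' : A'.Finite
  sA : SelfSuff m G A Set.univ
  sA' : SelfSuff m G' A' Set.univ
  e : G.induce A ≃g G'.induce A'

/-- `q` extends `p` -/
def PIso.Ext (p q : PIso m G G') : Prop :=
  (p.A ⊆ q.A) ∧ ∀ a : p.A, ∀ h : (a : V) ∈ q.A, (q.e ⟨a, h⟩ : V') = (p.e a : V')

lemma PIso.Ext.refl (p : PIso m G G') : PIso.Ext p p := by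
  refine ⟨subset_rfl, fun a h => ?_⟩
  congr

lemma PIso.Ext.trans {p q r : PIso m G G'} (h1 : PIso.Ext p q) (h2 : PIso.Ext q r) :
    PIso.Ext p r := by
  refine ⟨h1.1.trans h2.1, fun a h => ?_⟩
  have ha : (a : V) ∈ q.A := h1.1 a.2
  rw [h2.2 ⟨(a : V), ha⟩ h, h1.2 a ha]

/-- one step of back-and-forth: absorb `x` into the domain and `y` into the range -/
lemma step_exists (hG : IsGeneric m G) (hG' : IsGeneric m G')
    (p : PIso m G G') (x : V) (y : V') :
    ∃ q : PIso m G G', PIso.Ext p q ∧ x ∈ q.A ∧ y ∈ q.A' := by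
  obtain ⟨D, hCD, hDf, hDs⟩ := exists_selfSuff_superset hG (p.hA.insert x)
  have hAD : p.A ⊆ D := (Set.subset_insert x p.A).trans hCD
  obtain ⟨D', hD'f, hD's, hA'D', e₂, he₂⟩ :=
    forth hG hG' p.hA p.hA' hDf p.sA p.sA' hDs hAD p.e
  obtain ⟨E', hC'E', hE'f, hE's⟩ := exists_selfSuff_superset hG' (hD'f.insert y)
  have hD'E' : D' ⊆ E' := (Set.subset_insert y D').trans hC'E'
  obtain ⟨E, hEf, hEs, hDE, e₃, he₃⟩ :=
    back hG hG' hDf hD'f hE'f hDs hD's hE's hD'E' e₂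
  refine ⟨⟨E, E', hEf, hE'f, hEs, hE's, e₃⟩, ⟨(hAD.trans hDE), ?_⟩, ?_, ?_⟩
  · intro a h
    have haD : (a : V) ∈ D := hAD a.2
    have h1 : (e₃ ⟨(a : V), h⟩ : V') = (e₂ ⟨(a : V), haD⟩ : V') := he₃ ⟨(a : V), haD⟩ h
    rw [h1]
    have h2 := he₂ a
    rw [show Set.inclusion hAD a = (⟨(a : V), haD⟩ : D) from rfl] at h2
    exact h2
  · exact hDE (hCD (Set.mem_insert x p.A))
  · exact hC'E' (Set.mem_insert y D')

/-- the empty partial isomorphism -/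
noncomputable def emptyPIso (hG : IsGeneric m G) (hG' : IsGeneric m G') : PIso m G G' where
  A := ∅
  A' := ∅
  hA := Set.finite_empty
  hA' := Set.finite_empty
  sA := empty_selfSuff hG
  sA' := empty_selfSuff hG'
  e := by
    haveI h1 : IsEmpty ↥(∅ : Set V) := Set.isEmpty_coe_sort.2 rfl
    haveI h2 : IsEmpty ↥(∅ : Set V') := Set.isEmpty_coe_sort.2 rfl
    exact ⟨Equiv.equivOfIsEmpty _ _, by intro a; exact isEmptyElim a⟩

theorem genericUniqueAux (m : ℕ) (V V' : Type)
    [Countable V] [Infinite V] [Countable V'] [Infinite V']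
    (G : SimpleGraph V) (G' : SimpleGraph V')
    (hG : IsGeneric m G) (hG' : IsGeneric m G') :
    Nonempty (G ≃g G') := by
  classical
  obtain ⟨xs, hxs⟩ := exists_surjective_nat V
  obtain ⟨ys, hys⟩ := exists_surjective_nat V'
  -- the increasing sequence of partial isomorphisms
  let seq : ℕ → PIso m G G' := fun n =>
    Nat.rec (emptyPIso hG hG')
      (fun k p => Classical.choose (step_exists hG hG' p (xs k) (ys k))) n
  have hstep : ∀ n, PIso.Ext (seq n) (seq (n + 1)) ∧ xs n ∈ (seq (n + 1)).A ∧
      ys n ∈ (seq (n + 1)).A' := fun n =>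
    Classical.choose_spec (step_exists hG hG' (seq n) (xs n) (ys n))
  have hmono : ∀ n k, n ≤ k → PIso.Ext (seq n) (seq k) := by
    intro n k hnk
    induction hnk with
    | refl => exact PIso.Ext.refl _
    | step h ih =>
      exact PIso.Ext.trans ih (hstep _).1
  -- membership in the limit
  have hmemV : ∀ v : V, ∃ n, v ∈ (seq n).A := by
    intro v
    obtain ⟨k, rfl⟩ := hxs v
    exact ⟨k + 1, (hstep k).2.1⟩
  -- the limit map
  let nv : V → ℕ := fun v => Classical.choose (hmemV v)
  have hnv : ∀ v, v ∈ (seq (nv v)).A := fun v => Classical.choose_spec (hmemV v)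
  let h : V → V' := fun v => ((seq (nv v)).e ⟨v, hnv v⟩ : V')
  -- agreement
  have agree : ∀ (n k : ℕ) (v : V) (hv : v ∈ (seq n).A) (hk : v ∈ (seq k).A),
      ((seq n).e ⟨v, hv⟩ : V') = ((seq k).e ⟨v, hk⟩ : V') := by
    have one : ∀ (n k : ℕ), n ≤ k → ∀ (v : V) (hv : v ∈ (seq n).A) (hk : v ∈ (seq k).A),
        ((seq n).e ⟨v, hv⟩ : V') = ((seq k).e ⟨v, hk⟩ : V') := by
      intro n k hnk v hv hk
      exact ((hmono n k hnk).2 ⟨v, hv⟩ hk).symm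
    intro n k v hv hk
    rcases le_total n k with hle | hle
    · exact one n k hle v hv hk
    · exact (one k n hle v hk hv).symm
  have hcompute : ∀ (n : ℕ) (v : V) (hv : v ∈ (seq n).A), h v = ((seq n).e ⟨v, hv⟩ : V') :=
    fun n v hv => agree (nv v) n v (hnv v) hv
  -- injectivity
  have hinj : Function.Injective h := by
    intro u v huv
    set N := max (nv u) (nv v) with hN
    have hu : u ∈ (seq N).A := (hmono (nv u) N (le_max_left _ _)).1 (hnv u)
    have hv : v ∈ (seq N).A := (hmono (nv v) N (le_max_right _ _)).1 (hnv v)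
    rw [hcompute N u hu, hcompute N v hv] at huv
    have := (seq N).e.injective (Subtype.val_injective huv)
    exact congrArg Subtype.val this
  -- surjectivity
  have hsurj : Function.Surjective h := by
    intro y
    obtain ⟨k, rfl⟩ := hys y
    have hy : ys k ∈ (seq (k + 1)).A' := (hstep k).2.2
    set a := (seq (k + 1)).e.symm ⟨ys k, hy⟩ with ha
    refine ⟨(a : V), ?_⟩
    rw [hcompute (k + 1) (a : V) a.2]
    have : (⟨(a : V), a.2⟩ : (seq (k+1)).A) = a := rfl
    rw [this, ha, RelIso.apply_symm_apply]
  -- adjacency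
  have hadj : ∀ u v : V, G.Adj u v ↔ G'.Adj (h u) (h v) := by
    intro u v
    set N := max (nv u) (nv v) with hN
    have hu : u ∈ (seq N).A := (hmono (nv u) N (le_max_left _ _)).1 (hnv u)
    have hv : v ∈ (seq N).A := (hmono (nv v) N (le_max_right _ _)).1 (hnv v)
    rw [hcompute N u hu, hcompute N v hv]
    have := (seq N).e.map_adj_iff (v := ⟨u, hu⟩) (w := ⟨v, hv⟩)
    exact this.symm
  exact ⟨⟨Equiv.ofBijective h ⟨hinj, hsurj⟩, by
    intro a b
    exact (hadj a b).symm⟩⟩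

end MAIN

/-- Uniqueness of the `(K₀,≤)`-generic structure: any two countably infinite
`(K₀,≤)`-generic graphs are isomorphic. -/
theorem generic_unique (m : ℕ) (hm : 2 ≤ m) (V V' : Type)
    [Countable V] [Infinite V] [Countable V'] [Infinite V']
    (G : SimpleGraph V) (G' : SimpleGraph V')
    (hG : IsGeneric m G) (hG' : IsGeneric m G') :
    Nonempty (G ≃g G') :=
  genericUniqueAux m V V' G G' hG hG'
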